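/- Let (x_i^{(n)})_{i ≤ n} satisfy the binomial formula x_i^{(n)} = ∑_{j=0}^{n-i} C(n-i, j) x_{n-3j}^{(n-3j)} for all integers i ≤ n, together with x_3^{(n)} = 2 x_4^{(n)} and x_4^{(n)} = x_5^{(n)} for all n ≥ 5, and suppose S_n := x_1^{(n)} (so S_n = |S^{(n)}| in the paper). Then for n ≥ 6: S_n = x_{n+3}^{(n+3)} + ∑_{i=0}^{n-6} [C(n-5, i+1) + 4·C(n-5, i)]·x_{n-3i}^{(n-3i)} + 4·x_{15-2n}^{(15-2n)}. -/

import Mathlib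

private lemma sum_pascal_aux (M : ℕ) (f : ℕ → ℤ) :
    ∑ j ∈ Finset.range (M + 2), (Nat.choose (M + 1) j : ℤ) * f j
      = ∑ j ∈ Finset.range (M + 1), (Nat.choose M j : ℤ) * f j
        + ∑ j ∈ Finset.range (M + 1), (Nat.choose M j : ℤ) * f (j + 1) := by
  rw [Finset.sum_range_succ' (fun j => (Nat.choose (M + 1) j : ℤ) * f j) (M + 1)]
  have h1 : ∑ j ∈ Finset.range (M + 1), (Nat.choose M j : ℤ) * f j
      = ∑ j ∈ Finset.range (M + 1), (Nat.choose M (j + 1) : ℤ) * f (j + 1)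
        + (Nat.choose M 0 : ℤ) * f 0 := by
    have h2 : ∑ j ∈ Finset.range (M + 2), (Nat.choose M j : ℤ) * f j
        = ∑ j ∈ Finset.range (M + 1), (Nat.choose M j : ℤ) * f j := by
      rw [Finset.sum_range_succ, Nat.choose_eq_zero_of_lt (by omega : M < M + 1)]
      simp
    rw [← h2, Finset.sum_range_succ' (fun j => (Nat.choose M j : ℤ) * f j) (M + 1)]
  rw [h1]
  simp only [Nat.choose_succ_succ, Nat.choose_zero_right, Nat.succ_eq_add_one]
  push_cast
  simp only [add_mul]
  rw [Finset.sum_add_distrib]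
  ring

private lemma pascal (x : ℤ → ℤ → ℤ)
    (hbin : ∀ i n : ℤ, i ≤ n →
      x i n = ∑ j ∈ Finset.range ((n - i).toNat + 1),
        (Nat.choose (n - i).toNat j : ℤ) * x (n - 3 * j) (n - 3 * j)) :
    ∀ i n : ℤ, i + 1 ≤ n → x i n = x (i + 1) n + x (i - 2) (n - 3) := by
  intro i n h
  obtain ⟨M, hM⟩ : ∃ M : ℕ, (n - i).toNat = M + 1 :=
    ⟨(n - i - 1).toNat, by omega⟩
  have hM2 : (n - (i + 1)).toNat = M := by omega
  have hM3 : ((n - 3) - (i - 2)).toNat = M := by omega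
  rw [hbin i n (by omega), hbin (i + 1) n (by omega), hbin (i - 2) (n - 3) (by omega),
    hM, hM2, hM3]
  rw [sum_pascal_aux M (fun j => x (n - 3 * j) (n - 3 * j))]
  congr 1
  apply Finset.sum_congr rfl
  intro j _
  have : n - 3 * ((j : ℤ) + 1) = n - 3 - 3 * j := by ring
  push_cast
  rw [this]

theorem stmt_15 (x : ℤ → ℤ → ℤ)
    (hbin : ∀ i n : ℤ, i ≤ n →
      x i n = ∑ j ∈ Finset.range ((n - i).toNat + 1),
        (Nat.choose (n - i).toNat j : ℤ) * x (n - 3 * j) (n - 3 * j))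
    (hx34 : ∀ n : ℤ, 5 ≤ n → x 3 n = 2 * x 4 n)
    (hx45 : ∀ n : ℤ, 5 ≤ n → x 4 n = x 5 n) :
    ∀ n : ℕ, 6 ≤ n →
      x 1 n =
        x ((n : ℤ) + 3) ((n : ℤ) + 3) +
          (∑ i ∈ Finset.range (n - 5),
            ((Nat.choose (n - 5) (i + 1) : ℤ) + 4 * (Nat.choose (n - 5) i : ℤ)) *
              x ((n : ℤ) - 3 * i) ((n : ℤ) - 3 * i)) +
          4 * x (15 - 2 * (n : ℤ)) (15 - 2 * (n : ℤ)) := by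
  intro n hn
  have hn6 : (6 : ℤ) ≤ (n : ℤ) := by exact_mod_cast hn
  set N : ℤ := (n : ℤ) with hN
  -- step 1 : x 1 n = x 5 (n+3)
  have hp3 : x 3 (N + 3) = x 4 (N + 3) + x 1 N := by
    have := pascal x hbin 3 (N + 3) (by omega)
    convert this using 3 <;> ring
  have h34 := hx34 (N + 3) (by omega)
  have h45 := hx45 (N + 3) (by omega)
  have h15 : x 1 N = x 5 (N + 3) := by linarith
  -- step 2 : x 5 (n+3) = x 8 (n+3) + 4 * x 5 n
  have hp5 : x 5 (N + 3) = x 6 (N + 3) + x 3 N := by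
    have := pascal x hbin 5 (N + 3) (by omega)
    convert this using 3 <;> ring
  have hp6 : x 6 (N + 3) = x 7 (N + 3) + x 4 N := by
    have := pascal x hbin 6 (N + 3) (by omega)
    convert this using 3 <;> ring
  have hp7 : x 7 (N + 3) = x 8 (N + 3) + x 5 N := by
    have := pascal x hbin 7 (N + 3) (by omega)
    convert this using 3 <;> ring
  have h34' := hx34 N (by omega)
  have h45' := hx45 N (by omega)
  have h2 : x 5 (N + 3) = x 8 (N + 3) + 4 * x 5 N := by linarith
  -- step 3 : expand x 8 (N+3)
  have ht1 : ((N + 3) - 8).toNat = n - 5 := by omega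
  have h8 : x 8 (N + 3)
      = x (N + 3) (N + 3)
        + ∑ j ∈ Finset.range (n - 5),
            (Nat.choose (n - 5) (j + 1) : ℤ) * x (N - 3 * j) (N - 3 * j) := by
    rw [hbin 8 (N + 3) (by omega), ht1]
    rw [Finset.sum_range_succ'
      (fun j => (Nat.choose (n - 5) j : ℤ) * x (N + 3 - 3 * j) (N + 3 - 3 * j)) (n - 5)]
    simp only [Nat.choose_zero_right, Nat.cast_zero]
    rw [Finset.sum_congr rfl (fun j _ => by
      have : N + 3 - 3 * ((j : ℤ) + 1) = N - 3 * j := by ring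
      push_cast
      rw [this])]
    push_cast
    simp only [mul_zero, sub_zero]
    ring
  -- step 4 : expand x 5 N
  have ht2 : (N - 5).toNat = n - 5 := by omega
  have h5 : x 5 N
      = (∑ j ∈ Finset.range (n - 5),
            (Nat.choose (n - 5) j : ℤ) * x (N - 3 * j) (N - 3 * j))
        + x (15 - 2 * N) (15 - 2 * N) := by
    rw [hbin 5 N (by omega), ht2, Finset.sum_range_succ]
    have hc : ((n - 5 : ℕ) : ℤ) = N - 5 := by omega
    rw [hc]
    have : N - 3 * (N - 5) = 15 - 2 * N := by ring
    rw [this, Nat.choose_self]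
    push_cast
    ring
  -- assemble
  have hsplit : ∑ i ∈ Finset.range (n - 5),
      ((Nat.choose (n - 5) (i + 1) : ℤ) + 4 * (Nat.choose (n - 5) i : ℤ)) *
        x (N - 3 * i) (N - 3 * i)
      = (∑ i ∈ Finset.range (n - 5),
          (Nat.choose (n - 5) (i + 1) : ℤ) * x (N - 3 * i) (N - 3 * i))
        + 4 * ∑ i ∈ Finset.range (n - 5),
          (Nat.choose (n - 5) i : ℤ) * x (N - 3 * i) (N - 3 * i) := by
    rw [Finset.mul_sum, ← Finset.sum_add_distrib]
    exact Finset.sum_congr rfl (fun i _ => by ring)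
  rw [hsplit]
  linarith
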